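/- A finitely generated torsion FC group is finite. -/

import Mathlib

theorem stmt_4 {G : Type*} [Group G]
    (hFC : ∀ x : G, (Set.range fun h : G => h * x * h⁻¹).Finite)
    (htor : Monoid.IsTorsion G) (hfg : Group.FG G) :
    Finite G := by
  classical
  obtain ⟨S, hS⟩ := hfg.out
  -- each centralizer has finite index
  have key : ∀ x : G, (Subgroup.centralizer (Subgroup.zpowers x : Set G)).FiniteIndex := by
    intro x
    have heq : Subgroup.centralizer (Subgroup.zpowers x : Set G)
        = Subgroup.centralizer {x} := by
      apply le_antisymm
      · exact Subgroup.centralizer_le (by simpa using Subgroup.mem_zpowers x)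
      · intro g hg
        rw [Subgroup.mem_centralizer_iff] at hg ⊢
        rintro y ⟨n, rfl⟩
        have h1 : Commute x g := hg x (Set.mem_singleton x)
        exact (h1.zpow_left n)
    rw [heq]
    have horb : Finite (MulAction.orbit (ConjAct G) x) := by
      have : MulAction.orbit (ConjAct G) x ⊆ Set.range fun h : G => h * x * h⁻¹ := by
        rintro y ⟨g, rfl⟩
        exact ⟨ConjAct.ofConjAct g, rfl⟩
      exact ((hFC x).subset this).to_subtype
    have hq : Finite (ConjAct G ⧸ MulAction.stabilizer (ConjAct G) x) :=
      Finite.of_equiv _ (MulAction.orbitEquivQuotientStabilizer (ConjAct G) x)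
    haveI : (MulAction.stabilizer (ConjAct G) x).FiniteIndex :=
      Subgroup.finiteIndex_of_finite_quotient
    rw [Subgroup.centralizer_eq_comap_stabilizer]
    constructor
    refine ne_of_eq_of_ne (Subgroup.index_comap_of_surjective _ (f := (ConjAct.toConjAct : G ≃* ConjAct G).toMonoidHom) (MulEquiv.surjective ConjAct.toConjAct)) ?_
    exact Subgroup.FiniteIndex.index_ne_zero
  haveI : (Subgroup.center G).FiniteIndex := by
    rw [Subgroup.center_eq_iInf hS]
    have : (⨅ g ∈ (S : Set G), Subgroup.centralizer {g}).FiniteIndex := by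
      rw [iInf_subtype']
      haveI : Finite ((S : Set G) : Type _) := S.finite_toSet.to_subtype
      exact Subgroup.finiteIndex_iInf fun i => haveI := key i; Subgroup.finiteIndex_of_le (H := Subgroup.centralizer (Subgroup.zpowers (i : G) : Set G)) (Subgroup.centralizer_le (Set.singleton_subset_iff.mpr (Subgroup.mem_zpowers (i : G))))
    exact this
  haveI : Group.FG (Subgroup.center G) := Subgroup.fg_of_index_ne_zero _
  haveI : Finite (Subgroup.center G) :=
    letI : CommGroup (Subgroup.center G) := { (Subgroup.center G).toGroup with mul_comm := mul_comm' }
    CommGroup.finite_of_fg_torsion _ (IsTorsion.subgroup htor (Subgroup.center G))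
  haveI : Finite (G ⧸ Subgroup.center G) := inferInstance
  exact Finite.of_equiv _ (Subgroup.groupEquivQuotientProdSubgroup (s := Subgroup.center G)).symm
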